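/- Assume in addition that the Weierstrass equation has no F_q-rational affine solutions, i.e. Y² + a₁XY + a₃Y ≠ X³ + a₂X² + a₄X + a₆ for all X, Y ∈ F_q. Then every α ∈ O_∞ is (−4)-approximable: there exists a sequence f_n/g_n with f_n, g_n ∈ A, g_n ≠ 0, f_nA + g_nA = A, |α − f_n/g_n| < q⁴/|g_n|² for all n, and f_n/g_n → α in K_∞. (Case (1) of Example 8.7 of the paper: for an elliptic curve without rational affine points the quotient graph has center of diameter 4, and N = 1, so Theorem 1.4 gives the bound −4.) -/

import Mathlib

open Filter Polynomial MeasureTheory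
open scoped Multiplicative

notation "ℤₘ₀" => WithZero (Multiplicative ℤ)

/-- The real absolute value attached to a `ℤₘ₀`-valued valuation with base `q`:
`Multiplicative.ofAdd n ↦ q ^ n` and `0 ↦ 0`. -/
noncomputable def zabs (q : ℕ) (x : ℤₘ₀) : ℝ :=
  if hx : x = 0 then 0 else (q : ℝ) ^ Multiplicative.toAdd (WithZero.unzero hx)

set_option linter.unusedSectionVars false
set_option linter.unnecessarySimpa false
namespace ECApprox

noncomputable def e (k : ℤ) : ℤₘ₀ := ((Multiplicative.ofAdd k : Multiplicative ℤ) : ℤₘ₀)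

@[simp] lemma e_ne_zero (k : ℤ) : e k ≠ 0 := WithZero.coe_ne_zero
@[simp] lemma zero_lt_e (k : ℤ) : 0 < e k := WithZero.zero_lt_coe _
@[simp] lemma e_le_e {m n : ℤ} : e m ≤ e n ↔ m ≤ n := by
  rw [e, e, WithZero.coe_le_coe, Multiplicative.ofAdd_le]
@[simp] lemma e_lt_e {m n : ℤ} : e m < e n ↔ m < n := by
  rw [e, e, WithZero.coe_lt_coe, Multiplicative.ofAdd_lt]
@[simp] lemma e_inj {m n : ℤ} : e m = e n ↔ m = n := by
  constructor
  · intro h; exact le_antisymm (e_le_e.1 h.le) (e_le_e.1 h.ge)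
  · rintro rfl; rfl
lemma e_zero : e 0 = 1 := rfl
lemma e_add (m n : ℤ) : e (m + n) = e m * e n := by
  rw [e, e, e, ← WithZero.coe_mul, ← ofAdd_add]
lemma e_pow (k : ℤ) (n : ℕ) : e k ^ n = e (n * k) := by
  induction n with
  | zero => simp [e_zero]
  | succ n ih => rw [pow_succ, ih, ← e_add, Nat.cast_succ]; ring_nf
lemma e_div (m n : ℤ) : e m / e n = e (m - n) := by
  rw [div_eq_iff (e_ne_zero n), ← e_add]; ring_nf
lemma exists_e {z : ℤₘ₀} (h : z ≠ 0) : ∃ k : ℤ, z = e k := by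
  refine ⟨Multiplicative.toAdd (WithZero.unzero h), ?_⟩
  rw [e, ofAdd_toAdd, WithZero.coe_unzero]
lemma zero_le' (z : ℤₘ₀) : 0 ≤ z := _root_.zero_le'
lemma lt_e_iff {z : ℤₘ₀} {k : ℤ} : z < e k ↔ z ≤ e (k - 1) := by
  rcases eq_or_ne z 0 with rfl | hz
  · simpa using zero_le' _
  · obtain ⟨j, rfl⟩ := exists_e hz
    rw [e_lt_e, e_le_e]; omega
lemma e_max (m n : ℤ) : e (max m n) = max (e m) (e n) := by
  rcases le_total m n with h | h
  · rw [max_eq_right h, max_eq_right (e_le_e.2 h)]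
  · rw [max_eq_left h, max_eq_left (e_le_e.2 h)]
lemma one_le_e_iff {k : ℤ} : 1 ≤ e k ↔ 0 ≤ k := by rw [← e_zero, e_le_e]
lemma le_one_e_iff {k : ℤ} : e k ≤ 1 ↔ k ≤ 0 := by rw [← e_zero, e_le_e]

lemma zabs_zero (q : ℕ) : zabs q 0 = 0 := dif_pos rfl
lemma zabs_e (q : ℕ) (k : ℤ) : zabs q (e k) = (q : ℝ) ^ k := by
  have h : WithZero.unzero (e_ne_zero k) = Multiplicative.ofAdd k := by
    rw [← WithZero.coe_inj, WithZero.coe_unzero]; rfl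
  rw [zabs, dif_neg (e_ne_zero k), h, toAdd_ofAdd]
lemma zabs_nonneg (q : ℕ) (z : ℤₘ₀) : 0 ≤ zabs q z := by
  rcases eq_or_ne z 0 with rfl | hz
  · rw [zabs_zero]
  · obtain ⟨k, rfl⟩ := exists_e hz
    rw [zabs_e]
    positivity
lemma zabs_mono {q : ℕ} (hq : 1 ≤ (q : ℝ)) {x y : ℤₘ₀} (h : x ≤ y) :
    zabs q x ≤ zabs q y := by
  rcases eq_or_ne x 0 with rfl | hx
  · rw [zabs_zero]; exact zabs_nonneg q y
  · obtain ⟨j, rfl⟩ := exists_e hx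
    have hy : y ≠ 0 := fun h0 => hx (le_antisymm (h0 ▸ h) (zero_le' _)) |>.elim
    obtain ⟨k, rfl⟩ := exists_e hy
    rw [zabs_e, zabs_e]
    exact zpow_le_zpow_right₀ hq (e_le_e.1 h)
lemma zabs_lt_zabs {q : ℕ} (hq : 1 < (q : ℝ)) {j k : ℤ} (h : j < k) :
    zabs q (e j) < zabs q (e k) := by
  rw [zabs_e, zabs_e]
  exact zpow_lt_zpow_right₀ hq h
lemma zabs_le_one_imp {q : ℕ} (hq : 1 < (q : ℝ)) {z : ℤₘ₀} (h : zabs q z ≤ 1) :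
    z ≤ e 0 := by
  rcases eq_or_ne z 0 with rfl | hz
  · exact zero_le' _
  · obtain ⟨k, rfl⟩ := exists_e hz
    rw [zabs_e] at h
    rw [e_le_e]
    by_contra hk
    push_neg at hk
    have : (1:ℝ) < (q:ℝ)^k := one_lt_zpow₀ hq (by omega)
    linarith

section Curve

variable {Fq : Type} [Field Fq] [Fintype Fq] {W : WeierstrassCurve.Affine Fq}

open WeierstrassCurve.Affine

/-- abbreviation for the coordinate ring -/
local notation "circR" => 0

noncomputable def PX (W : WeierstrassCurve.Affine Fq) : Fq[X] →+* W.CoordinateRing :=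
  (CoordinateRing.mk W).comp (Polynomial.C : Fq[X] →+* Fq[X][X])

noncomputable def yA (W : WeierstrassCurve.Affine Fq) : W.CoordinateRing :=
  CoordinateRing.mk W Polynomial.X

variable (ν : Valuation W.FunctionField ℤₘ₀)

noncomputable def EE (a : W.CoordinateRing) : ℤₘ₀ :=
  ν (algebraMap W.CoordinateRing W.FunctionField a)

lemma algebraMap_PX (p : Fq[X]) : algebraMap Fq[X] W.CoordinateRing p = PX W p := by
  have h1 : p • (1 : W.CoordinateRing) = PX W p * 1 := CoordinateRing.smul p 1
  rw [Algebra.smul_def] at h1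
  simpa using h1

lemma smul_eq_PX_mul (p : Fq[X]) (a : W.CoordinateRing) : p • a = PX W p * a :=
  CoordinateRing.smul p a

lemma cA_eq (c : Fq) : algebraMap Fq W.CoordinateRing c = PX W (Polynomial.C c) := by
  rw [IsScalarTower.algebraMap_apply Fq Fq[X] W.CoordinateRing, algebraMap_PX]
  rfl

lemma repr_exists (a : W.CoordinateRing) :
    ∃ p s : Fq[X], a = PX W p + PX W s * yA W := by
  obtain ⟨p, s, h⟩ := CoordinateRing.exists_smul_basis_eq a
  exact ⟨p, s, by rw [← h, smul_eq_PX_mul, smul_eq_PX_mul, mul_one]; rfl⟩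

lemma repr_zero {p s : Fq[X]} (h : PX W p + PX W s * yA W = 0) : p = 0 ∧ s = 0 := by
  apply CoordinateRing.smul_basis_eq_zero (W' := W) (p := p) (q := s)
  rw [smul_eq_PX_mul, smul_eq_PX_mul, mul_one]
  exact h

lemma E_zero : EE ν (0 : W.CoordinateRing) = 0 := by simp [EE]

lemma E_eq_zero_iff (a : W.CoordinateRing) : EE ν a = 0 ↔ a = 0 := by
  rw [EE, Valuation.zero_iff]
  constructor
  · intro h
    exact IsFractionRing.injective W.CoordinateRing W.FunctionField (by simpa using h)
  · rintro rfl; simp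

lemma E_mul (a b : W.CoordinateRing) : EE ν (a * b) = EE ν a * EE ν b := by
  simp [EE, map_mul]

lemma E_add_le (a b : W.CoordinateRing) : EE ν (a + b) ≤ max (EE ν a) (EE ν b) := by
  rw [EE, RingHom.map_add]; exact ν.map_add _ _

lemma E_sub_le (a b : W.CoordinateRing) : EE ν (a - b) ≤ max (EE ν a) (EE ν b) := by
  rw [EE, RingHom.map_sub]; exact ν.map_sub _ _

lemma E_add_of_le_of_lt {a b : W.CoordinateRing} {z : ℤₘ₀} (hb : EE ν b ≤ z)
    (hz : z < EE ν a) : EE ν (a + b) = EE ν a := by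
  rw [EE, RingHom.map_add]
  exact ν.map_add_eq_of_lt_left (lt_of_le_of_lt hb hz)

lemma E_add_distinct {a b : W.CoordinateRing} (h : EE ν a ≠ EE ν b) :
    EE ν (a + b) = max (EE ν a) (EE ν b) := by
  rw [EE, RingHom.map_add]
  exact ν.map_add_of_distinct_val h

variable (hconst : ∀ c : Fq, c ≠ 0 →
    ν (algebraMap W.CoordinateRing W.FunctionField (algebraMap Fq W.CoordinateRing c)) = 1)

include hconst in
lemma E_C {c : Fq} (hc : c ≠ 0) : EE ν (algebraMap Fq W.CoordinateRing c) = 1 := hconst c hc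

include hconst in
lemma E_C_mul_le (c : Fq) (a : W.CoordinateRing) :
    EE ν (algebraMap Fq W.CoordinateRing c * a) ≤ EE ν a := by
  rcases eq_or_ne c 0 with rfl | hc
  · simp [E_zero, zero_le']
  · rw [E_mul, E_C ν hconst hc, one_mul]


lemma PX_apply (p : Fq[X]) : PX W p = CoordinateRing.mk W (Polynomial.C p) := rfl

lemma yA_def : yA W = CoordinateRing.mk W Polynomial.X := rfl

lemma E_pow (a : W.CoordinateRing) (n : ℕ) : EE ν (a ^ n) = EE ν a ^ n := by
  rw [EE, RingHom.map_pow, map_pow]; rfl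

lemma E_ne_zero_of_ne {a : W.CoordinateRing} (ha : a ≠ 0) : EE ν a ≠ 0 :=
  fun h => ha ((E_eq_zero_iff ν a).mp h)

lemma ne_const {p s : Fq[X]} (h : s ≠ 0 ∨ 0 < p.natDegree) :
    ∀ c : Fq, PX W p + PX W s * yA W ≠ algebraMap Fq W.CoordinateRing c := by
  intro c hc
  have h0 : PX W (p - Polynomial.C c) + PX W s * yA W = 0 := by
    rw [cA_eq] at hc
    rw [map_sub]
    linear_combination hc
  obtain ⟨h1, h2⟩ := repr_zero h0
  rcases h with hs | hd
  · exact hs h2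
  · rw [sub_eq_zero] at h1
    rw [h1, Polynomial.natDegree_C] at hd
    exact lt_irrefl 0 hd

lemma curve_rel : yA W * (yA W + PX W (Polynomial.C W.a₁ * X + Polynomial.C W.a₃)) =
    PX W (X ^ 3 + Polynomial.C W.a₂ * X ^ 2 + Polynomial.C W.a₄ * X + Polynomial.C W.a₆) := by
  have h : CoordinateRing.mk W (X ^ 2 + C (C W.a₁ * X + C W.a₃) * X -
      C (X ^ 3 + C W.a₂ * X ^ 2 + C W.a₄ * X + C W.a₆)) = 0 := by
    rw [← WeierstrassCurve.Affine.polynomial]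
    exact AdjoinRoot.mk_self
  simp only [map_add, map_sub, map_mul, map_pow] at h
  simp only [PX_apply, yA_def, map_add, map_sub, map_mul, map_pow]
  linear_combination h

variable {u : ℤ}

include hconst in
lemma E_PX_poly (hu : EE ν (PX W (X : Fq[X])) = e u) (hu1 : 1 ≤ u) :
    ∀ p : Fq[X], p ≠ 0 → EE ν (PX W p) = e (u * p.natDegree) := by
  have base : ∀ p : Fq[X], p ≠ 0 → p.natDegree = 0 → EE ν (PX W p) = e (u * p.natDegree) := by
    intro p hp h0
    obtain ⟨c, rfl⟩ := Polynomial.natDegree_eq_zero.mp h0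
    have hc : c ≠ 0 := by rintro rfl; simp at hp
    rw [← cA_eq, E_C ν hconst hc, Polynomial.natDegree_C]
    simp [e_zero]
  suffices H : ∀ n : ℕ, ∀ p : Fq[X], p ≠ 0 → p.natDegree ≤ n →
      EE ν (PX W p) = e (u * p.natDegree) by
    intro p hp
    exact H p.natDegree p hp le_rfl
  intro n
  induction n with
  | zero => intro p hp hd; exact base p hp (Nat.le_zero.mp hd)
  | succ n ih =>
    intro p hp hd
    by_cases h0 : p.natDegree = 0
    · exact base p hp h0
    · have hlc : p.leadingCoeff ≠ 0 := Polynomial.leadingCoeff_ne_zero.mpr hp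
      have hlead : EE ν (PX W (Polynomial.C p.leadingCoeff * X ^ p.natDegree)) =
          e (u * p.natDegree) := by
        rw [map_mul, map_pow, E_mul, ← cA_eq, E_C ν hconst hlc, one_mul, E_pow, hu, e_pow]
        congr 1
        ring
      by_cases he : p.eraseLead = 0
      · have hpe : p = Polynomial.C p.leadingCoeff * X ^ p.natDegree := by
          conv_lhs => rw [← Polynomial.eraseLead_add_C_mul_X_pow p]
          rw [he, zero_add]
        calc EE ν (PX W p) = EE ν (PX W (Polynomial.C p.leadingCoeff * X ^ p.natDegree)) := by
              rw [← hpe]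
          _ = e (u * p.natDegree) := hlead
      · have hde : p.eraseLead.natDegree < p.natDegree := by
          rcases Polynomial.eraseLead_natDegree_lt_or_eraseLead_eq_zero p with h | h
          · exact h
          · exact absurd h he
        have hih := ih p.eraseLead he (by omega)
        have heq : PX W p = PX W (Polynomial.C p.leadingCoeff * X ^ p.natDegree) +
            PX W p.eraseLead := by
          rw [← map_add, add_comm, Polynomial.eraseLead_add_C_mul_X_pow]
        rw [heq, E_add_of_le_of_lt ν (le_of_eq hih) ?_, hlead]
        rw [hlead, e_lt_e]
        have : (p.eraseLead.natDegree : ℤ) < (p.natDegree : ℤ) := by exact_mod_cast hde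
        nlinarith

include hconst in
lemma E_PX_le (hu : EE ν (PX W (X : Fq[X])) = e u) (hu1 : 1 ≤ u) (p : Fq[X]) (k : ℕ)
    (hk : p.natDegree ≤ k) : EE ν (PX W p) ≤ e (u * k) := by
  rcases eq_or_ne p 0 with rfl | hp
  · rw [map_zero, E_zero]; exact zero_le' _
  · rw [E_PX_poly ν hconst hu hu1 p hp, e_le_e]
    have : (p.natDegree : ℤ) ≤ (k : ℤ) := by exact_mod_cast hk
    nlinarith


variable (hneg : ∀ a : W.CoordinateRing, (∀ c : Fq, a ≠ algebraMap Fq W.CoordinateRing c) →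
    1 < ν (algebraMap W.CoordinateRing W.FunctionField a))
variable (hsurj : Function.Surjective ν)

open scoped Classical in
noncomputable def dval (p s : Fq[X]) : ℤₘ₀ :=
  max (if p = 0 then 0 else e (2 * p.natDegree)) (if s = 0 then 0 else e (2 * s.natDegree + 3))

include hconst hneg hsurj in
theorem master : ∀ p s : Fq[X], EE ν (PX W p + PX W s * yA W) = dval p s := by
  classical
  have hneg' : ∀ a : W.CoordinateRing, (∀ c : Fq, a ≠ algebraMap Fq W.CoordinateRing c) →
      1 < EE ν a := hneg
  -- X is nonconstant
  have hx : ∀ c : Fq, PX W (X : Fq[X]) ≠ algebraMap Fq W.CoordinateRing c := by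
    intro c
    have := ne_const (W := W) (p := (X : Fq[X])) (s := 0) (Or.inr (by simp)) c
    simpa using this
  have hx0 : PX W (X : Fq[X]) ≠ 0 := fun h => hx 0 (by simp [h])
  obtain ⟨u, hu⟩ := exists_e (E_ne_zero_of_ne ν hx0)
  have hu1 : 1 ≤ u := by
    have := hneg' _ hx
    rw [hu, ← e_zero, e_lt_e] at this
    omega
  -- Y is nonconstant
  have hy : ∀ c : Fq, yA W ≠ algebraMap Fq W.CoordinateRing c := by
    intro c
    have := ne_const (W := W) (p := (0 : Fq[X])) (s := 1) (Or.inl one_ne_zero) c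
    simpa using this
  have hy0 : yA W ≠ 0 := fun h => hy 0 (by simp [h])
  obtain ⟨v, hv⟩ := exists_e (E_ne_zero_of_ne ν hy0)
  have hv1 : 1 ≤ v := by
    have := hneg' _ hy
    rw [hv, ← e_zero, e_lt_e] at this
    omega
  -- the element t = y + a₁ x + a₃
  have htnc : ∀ c : Fq, yA W + PX W (Polynomial.C W.a₁ * X + Polynomial.C W.a₃) ≠
      algebraMap Fq W.CoordinateRing c := by
    intro c h
    refine ne_const (W := W) (p := Polynomial.C W.a₁ * X + Polynomial.C W.a₃) (s := 1)
      (Or.inl one_ne_zero) c ?_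
    rw [map_one, one_mul, add_comm]
    exact h
  have ht0 : yA W + PX W (Polynomial.C W.a₁ * X + Polynomial.C W.a₃) ≠ 0 :=
    fun h => htnc 0 (by rw [map_zero]; exact h)
  obtain ⟨w, hw⟩ := exists_e (E_ne_zero_of_ne ν ht0)
  have hw1 : 1 ≤ w := by
    have := hneg' _ htnc
    rw [hw, ← e_zero, e_lt_e] at this
    omega
  -- the curve relation gives v + w = 3u
  have hprd : (X ^ 3 + Polynomial.C W.a₂ * X ^ 2 + Polynomial.C W.a₄ * X +
      Polynomial.C W.a₆ : Fq[X]).natDegree = 3 := by compute_degree!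
  have hpr0 : (X ^ 3 + Polynomial.C W.a₂ * X ^ 2 + Polynomial.C W.a₄ * X +
      Polynomial.C W.a₆ : Fq[X]) ≠ 0 := fun h => by simp [h] at hprd
  have hpr : EE ν (PX W (X ^ 3 + Polynomial.C W.a₂ * X ^ 2 + Polynomial.C W.a₄ * X +
      Polynomial.C W.a₆)) = e (3 * u) := by
    rw [E_PX_poly ν hconst hu hu1 _ hpr0, hprd]
    congr 1 <;> push_cast <;> ring
  have hvw : v + w = 3 * u := by
    have h1 : EE ν (yA W * (yA W + PX W (Polynomial.C W.a₁ * X + Polynomial.C W.a₃))) =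
        e (3 * u) := by rw [curve_rel]; exact hpr
    rw [E_mul, hv, hw, ← e_add] at h1
    exact e_inj.mp h1
  have hptle : EE ν (PX W (Polynomial.C W.a₁ * X + Polynomial.C W.a₃)) ≤ e (u * 1) :=
    E_PX_le ν hconst hu hu1 _ 1 (by compute_degree)
  have hwb : w ≤ v ∨ w ≤ u := by
    have h1 := E_add_le ν (yA W) (PX W (Polynomial.C W.a₁ * X + Polynomial.C W.a₃))
    rw [hw, hv] at h1
    have h2 : e w ≤ max (e v) (e (u * 1)) := le_trans h1 (max_le_max le_rfl hptle)
    rw [mul_one, ← e_max, e_le_e] at h2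
    omega
  have hvb : v ≤ w ∨ v ≤ u := by
    have h1 : EE ν (yA W) ≤ max (EE ν (yA W + PX W (Polynomial.C W.a₁ * X + Polynomial.C W.a₃)))
        (EE ν (PX W (Polynomial.C W.a₁ * X + Polynomial.C W.a₃))) := by
      have := E_sub_le ν (yA W + PX W (Polynomial.C W.a₁ * X + Polynomial.C W.a₃))
        (PX W (Polynomial.C W.a₁ * X + Polynomial.C W.a₃))
      simpa using this
    rw [hv, hw] at h1
    have h2 : e v ≤ max (e w) (e (u * 1)) := le_trans h1 (max_le_max le_rfl hptle)
    rw [mul_one, ← e_max, e_le_e] at h2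
    omega
  obtain ⟨t, ht, hut, hvt⟩ : ∃ t : ℤ, 1 ≤ t ∧ u = 2 * t ∧ v = 3 * t :=
    ⟨v - u, by omega, by omega, by omega⟩
  -- intermediate master
  have M0 : ∀ p s : Fq[X], EE ν (PX W p + PX W s * yA W) =
      max (if p = 0 then 0 else e (u * p.natDegree))
        (if s = 0 then 0 else e (u * s.natDegree + v)) := by
    intro p s
    rcases eq_or_ne p 0 with rfl | hp <;> rcases eq_or_ne s 0 with rfl | hs
    · simp [E_zero]
    · rw [if_pos rfl, if_neg hs, map_zero, zero_add, E_mul,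
        E_PX_poly ν hconst hu hu1 s hs, hv, ← e_add, max_eq_right (zero_le' _)]
    · rw [if_neg hp, if_pos rfl, map_zero, zero_mul, add_zero,
        E_PX_poly ν hconst hu hu1 p hp, max_eq_left (zero_le' _)]
    · have h1 : EE ν (PX W p) = e (u * p.natDegree) := E_PX_poly ν hconst hu hu1 p hp
      have h2 : EE ν (PX W s * yA W) = e (u * s.natDegree + v) := by
        rw [E_mul, E_PX_poly ν hconst hu hu1 s hs, hv, ← e_add]
      have hne : EE ν (PX W p) ≠ EE ν (PX W s * yA W) := by
        rw [h1, h2]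
        intro hcon
        rw [e_inj] at hcon
        have hcan : t * (2 * (p.natDegree : ℤ)) = t * (2 * (s.natDegree : ℤ) + 3) := by
          rw [hut, hvt] at hcon
          ring_nf at hcon ⊢
          linarith
        have := mul_left_cancel₀ (show (t : ℤ) ≠ 0 by omega) hcan
        omega
      rw [E_add_distinct ν hne, h1, h2, if_neg hp, if_neg hs]
  -- t = 1 via surjectivity
  have ht1 : t = 1 := by
    obtain ⟨h1K, hν1⟩ := hsurj (e 1)
    obtain ⟨a, b, hb, hab⟩ := IsFractionRing.div_surjective (A := W.CoordinateRing) h1K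
    have hbne : b ≠ 0 := nonZeroDivisors.ne_zero hb
    have hane : a ≠ 0 := by
      rintro rfl
      rw [map_zero, zero_div] at hab
      rw [← hab] at hν1
      simp at hν1
      exact (e_ne_zero 1) hν1.symm
    have hdvd : ∀ a : W.CoordinateRing, a ≠ 0 → ∃ k : ℤ, EE ν a = e k ∧ t ∣ k := by
      intro a ha
      obtain ⟨p, s, rfl⟩ := repr_exists a
      rw [M0 p s]
      rcases eq_or_ne p 0 with rfl | hp <;> rcases eq_or_ne s 0 with rfl | hs
      · exact absurd (by simp) ha
      · refine ⟨u * s.natDegree + v, by rw [if_pos rfl, if_neg hs, max_eq_right (zero_le' _)], ?_⟩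
        exact ⟨2 * s.natDegree + 3, by rw [hut, hvt]; ring⟩
      · refine ⟨u * p.natDegree, by rw [if_neg hp, if_pos rfl, max_eq_left (zero_le' _)], ?_⟩
        exact ⟨2 * p.natDegree, by rw [hut]; ring⟩
      · rw [if_neg hp, if_neg hs, ← e_max]
        refine ⟨_, rfl, ?_⟩
        rcases max_cases (u * (p.natDegree : ℤ)) (u * (s.natDegree : ℤ) + v) with ⟨hm, _⟩ | ⟨hm, _⟩
        · rw [hm]; exact ⟨2 * p.natDegree, by rw [hut]; ring⟩
        · rw [hm]; exact ⟨2 * s.natDegree + 3, by rw [hut, hvt]; ring⟩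
    obtain ⟨ka, hka, hkad⟩ := hdvd a hane
    obtain ⟨kb, hkb, hkbd⟩ := hdvd b hbne
    have hka' : ν (algebraMap W.CoordinateRing W.FunctionField a) = e ka := hka
    have hkb' : ν (algebraMap W.CoordinateRing W.FunctionField b) = e kb := hkb
    have hmul : e 1 * e kb = e ka := by
      rw [← hν1, ← hab, map_div₀, hka', hkb', div_mul_cancel₀ _ (e_ne_zero kb)]
    rw [← e_add, e_inj] at hmul
    have hsub : t ∣ ka - kb := dvd_sub hkad hkbd
    have h1 : t ∣ 1 := by
      have he : ka - kb = 1 := by omega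
      rw [← he]
      exact hsub
    rcases Int.isUnit_iff.mp (isUnit_of_dvd_one h1) with h | h <;> omega
  intro p s
  have hu2 : u = 2 := by omega
  have hv3 : v = 3 := by omega
  rw [M0 p s, hu2, hv3, dval]


include hconst hneg hsurj in
lemma E_vals : ∀ a : W.CoordinateRing, a ≠ 0 → ∃ k : ℕ, EE ν a = e k ∧ k ≠ 1 := by
  classical
  intro a ha
  obtain ⟨p, s, rfl⟩ := repr_exists a
  rw [master ν hconst hneg hsurj p s, dval]
  rcases eq_or_ne p 0 with rfl | hp <;> rcases eq_or_ne s 0 with rfl | hs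
  · exact absurd (by simp) ha
  · refine ⟨2 * s.natDegree + 3, ?_, by omega⟩
    rw [if_pos rfl, if_neg hs, max_eq_right (zero_le' _)]
    congr 1 <;> push_cast <;> ring
  · refine ⟨2 * p.natDegree, ?_, by omega⟩
    rw [if_neg hp, if_pos rfl, max_eq_left (zero_le' _)]
    congr 1 <;> push_cast <;> ring
  · rw [if_neg hp, if_neg hs, ← e_max]
    rcases max_cases (2 * (p.natDegree : ℤ)) (2 * (s.natDegree : ℤ) + 3) with ⟨hm, _⟩ | ⟨hm, _⟩
    · refine ⟨2 * p.natDegree, ?_, by omega⟩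
      rw [hm]
      congr 1 <;> push_cast <;> ring
    · refine ⟨2 * s.natDegree + 3, ?_, by omega⟩
      rw [hm]
      congr 1 <;> push_cast <;> ring

include hconst hneg hsurj in
lemma monomial_exists : ∀ k : ℕ, 2 ≤ k → ∃ m : W.CoordinateRing, EE ν m = e k := by
  classical
  intro k hk
  rcases Nat.even_or_odd k with ⟨j, hj⟩ | ⟨j, hj⟩
  · refine ⟨PX W (X ^ j), ?_⟩
    have h := master ν hconst hneg hsurj (X ^ j) 0
    rw [map_zero, zero_mul, add_zero] at h
    rw [h, dval, if_neg (pow_ne_zero _ Polynomial.X_ne_zero), if_pos rfl, max_eq_left (zero_le' _)]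
    rw [Polynomial.natDegree_X_pow]
    congr 1 <;> push_cast <;> omega
  · have hj1 : 1 ≤ j := by omega
    refine ⟨PX W (X ^ (j - 1)) * yA W, ?_⟩
    have h := master ν hconst hneg hsurj 0 (X ^ (j - 1))
    rw [map_zero, zero_add] at h
    rw [h, dval, if_pos rfl, if_neg (pow_ne_zero _ Polynomial.X_ne_zero), max_eq_right (zero_le' _)]
    rw [Polynomial.natDegree_X_pow]
    congr 1 <;> push_cast [hj1] <;> omega

variable (hres : Nat.card (IsLocalRing.ResidueField ν.valuationSubring) = Fintype.card Fq)

include hconst hres in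
lemma resid : ∀ h h' : W.FunctionField, h' ≠ 0 → ν h = ν h' →
    ∃ c : Fq, ν (h - algebraMap W.CoordinateRing W.FunctionField
      (algebraMap Fq W.CoordinateRing c) * h') < ν h' := by
  classical
  set ψ : Fq →+* W.FunctionField :=
    (algebraMap W.CoordinateRing W.FunctionField).comp (algebraMap Fq W.CoordinateRing) with hψ
  have hψle : ∀ c : Fq, ν (ψ c) ≤ 1 := by
    intro c
    rcases eq_or_ne c 0 with rfl | hc
    · simp
    · exact le_of_eq (hconst c hc)
  set O := ν.valuationSubring with hO
  have hmem : ∀ c : Fq, ψ c ∈ O := fun c => (Valuation.mem_valuationSubring_iff ν _).mpr (hψle c)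
  set ψO : Fq →+* O := ψ.codRestrict O.toSubring hmem with hψO
  set ι : Fq →+* IsLocalRing.ResidueField O := (IsLocalRing.residue O).comp ψO with hι
  have hinj : Function.Injective ι := ι.injective
  have hfin : Finite (IsLocalRing.ResidueField O) := by
    apply Nat.finite_of_card_ne_zero
    rw [hres]
    exact Fintype.card_ne_zero
  haveI := hfin
  haveI : Fintype (IsLocalRing.ResidueField O) := Fintype.ofFinite _
  have hsurjι : Function.Surjective ι := by
    have hcard : Fintype.card Fq = Fintype.card (IsLocalRing.ResidueField O) := by
      rw [Nat.card_eq_fintype_card] at hres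
      omega
    exact ((Fintype.bijective_iff_injective_and_card ι).mpr ⟨hinj, hcard⟩).2
  intro h h' hne hval
  have hν' : ν h' ≠ 0 := (Valuation.ne_zero_iff ν).mpr hne
  have hz1 : ν (h / h') = 1 := by
    rw [map_div₀, hval, div_self hν']
  set z := h / h' with hzdef
  have hzO : z ∈ O := (Valuation.mem_valuationSubring_iff ν _).mpr (le_of_eq hz1)
  obtain ⟨c, hc⟩ := hsurjι (IsLocalRing.residue O ⟨z, hzO⟩)
  have hres0 : IsLocalRing.residue O (⟨z, hzO⟩ - ψO c) = 0 := by
    rw [RingHom.map_sub]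
    have hcc : IsLocalRing.residue O (ψO c) = ι c := rfl
    rw [hcc, hc, sub_self]
  have hmax : (⟨z, hzO⟩ - ψO c : O) ∈ IsLocalRing.maximalIdeal O :=
    Ideal.Quotient.eq_zero_iff_mem.mp hres0
  have hcoe : ((⟨z, hzO⟩ - ψO c : O) : W.FunctionField) = z - ψ c := rfl
  have hlt1 : ν (z - ψ c) < 1 := by
    have hle1 : ν (z - ψ c) ≤ 1 := by
      have := (⟨z, hzO⟩ - ψO c : O).2
      rw [hcoe] at this
      exact (Valuation.mem_valuationSubring_iff ν _).mp this
    rcases lt_or_eq_of_le hle1 with hlt | heq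
    · exact hlt
    · exfalso
      have hz0 : z - ψ c ≠ 0 := by
        intro h0
        rw [h0] at heq
        simp at heq
      have hinv : ν (z - ψ c)⁻¹ = 1 := by
        rw [map_inv₀, heq]
        simp
      have hinvO : (z - ψ c)⁻¹ ∈ O := (Valuation.mem_valuationSubring_iff ν _).mpr (le_of_eq hinv)
      have hu : IsUnit (⟨z, hzO⟩ - ψO c : O) := by
        apply IsUnit.of_mul_eq_one ⟨(z - ψ c)⁻¹, hinvO⟩
        apply Subtype.ext
        show (z - ψ c) * (z - ψ c)⁻¹ = 1
        exact mul_inv_cancel₀ hz0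
      exact (IsLocalRing.mem_maximalIdeal _).mp hmax hu
  refine ⟨c, ?_⟩
  have heq2 : h - ψ c * h' = (z - ψ c) * h' := by
    rw [hzdef, sub_mul, div_mul_cancel₀ h hne]
  rw [show algebraMap W.CoordinateRing W.FunctionField (algebraMap Fq W.CoordinateRing c) = ψ c
    from rfl, heq2, map_mul]
  rcases eq_or_ne (ν (z - ψ c)) 0 with h0 | h0
  · rw [h0, zero_mul]
    exact lt_of_le_of_ne (zero_le' _) (Ne.symm hν')
  · obtain ⟨j, hj⟩ := exists_e h0
    obtain ⟨k, hk⟩ := exists_e hν'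
    rw [hj, hk, ← e_add]
    rw [hj, ← e_zero] at hlt1
    rw [e_lt_e] at hlt1 ⊢
    omega


lemma EE_def (a : W.CoordinateRing) :
    EE ν a = ν (algebraMap W.CoordinateRing W.FunctionField a) := rfl

include hconst hres in
lemma residA : ∀ a w : W.CoordinateRing, w ≠ 0 → EE ν a = EE ν w →
    ∃ c : Fq, EE ν (a - algebraMap Fq W.CoordinateRing c * w) < EE ν w := by
  intro a w hw hE
  have hφw : algebraMap W.CoordinateRing W.FunctionField w ≠ 0 :=
    fun h0 => hw (IsFractionRing.injective W.CoordinateRing W.FunctionField (by simpa using h0))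
  obtain ⟨c, hc⟩ := resid ν hconst hres (algebraMap W.CoordinateRing W.FunctionField a)
    (algebraMap W.CoordinateRing W.FunctionField w) hφw hE
  refine ⟨c, ?_⟩
  rw [EE_def, EE_def, RingHom.map_sub, RingHom.map_mul]
  exact hc

include hconst hneg hsurj hres in
lemma division (b : W.CoordinateRing) (hb : b ≠ 0) :
    ∀ a : W.CoordinateRing, ∃ s : W.CoordinateRing, EE ν (a - s * b) ≤ EE ν b * e 1 := by
  obtain ⟨d, hd, _⟩ := E_vals ν hconst hneg hsurj b hb
  suffices H : ∀ n : ℕ, ∀ a : W.CoordinateRing, EE ν a ≤ e n →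
      ∃ s, EE ν (a - s * b) ≤ EE ν b * e 1 by
    intro a
    rcases eq_or_ne a 0 with rfl | ha
    · exact H 0 0 (by rw [E_zero]; exact zero_le' _)
    · obtain ⟨k, hk, _⟩ := E_vals ν hconst hneg hsurj a ha
      exact H k a (le_of_eq hk)
  intro n
  induction n with
  | zero =>
    intro a ha
    refine ⟨0, ?_⟩
    rw [zero_mul, sub_zero]
    calc EE ν a ≤ e 0 := ha
      _ ≤ EE ν b * e 1 := by rw [hd, ← e_add, e_le_e]; omega
  | succ n ih =>
    intro a ha
    by_cases hsm : EE ν a ≤ EE ν b * e 1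
    · exact ⟨0, by rw [zero_mul, sub_zero]; exact hsm⟩
    · have ha0 : a ≠ 0 := by
        rintro rfl
        exact hsm (by rw [E_zero]; exact zero_le' _)
      obtain ⟨k, hk, _⟩ := E_vals ν hconst hneg hsurj a ha0
      have hkn : (k : ℤ) ≤ (n : ℤ) + 1 := by
        rw [hk] at ha
        rw [e_le_e] at ha
        push_cast at ha ⊢
        omega
      have hkd : d + 2 ≤ k := by
        rw [hk, hd, ← e_add] at hsm
        by_contra hcon
        exact hsm (e_le_e.mpr (by push_cast; omega))
      obtain ⟨m, hm⟩ := monomial_exists ν hconst hneg hsurj (k - d) (by omega)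
      have hm0 : m ≠ 0 := by
        intro h0
        rw [h0, E_zero] at hm
        exact (e_ne_zero _) hm.symm
      have hmb : EE ν (m * b) = e k := by
        rw [E_mul, hm, hd, ← e_add]
        congr 1
        push_cast
        omega
      obtain ⟨c, hc⟩ := residA ν hconst hres a (m * b) (mul_ne_zero hm0 hb)
        (by rw [hk, hmb])
      rw [hmb] at hc
      have hle : EE ν (a - algebraMap Fq W.CoordinateRing c * (m * b)) ≤ e n := by
        have h1 := lt_e_iff.mp hc
        exact le_trans h1 (e_le_e.mpr (by omega))
      obtain ⟨s', hs'⟩ := ih _ hle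
      refine ⟨algebraMap Fq W.CoordinateRing c * m + s', ?_⟩
      have heq : a - (algebraMap Fq W.CoordinateRing c * m + s') * b =
          (a - algebraMap Fq W.CoordinateRing c * (m * b)) - s' * b := by ring
      rw [heq]
      exact hs'

include hconst hneg hsurj hres in
lemma reduction : ∀ n : ℕ, ∀ h : W.FunctionField, ν h ≤ e ((n : ℤ) + 1) →
    ∃ a : W.CoordinateRing, EE ν a ≤ e ((n : ℤ) + 1) ∧
      ν (h - algebraMap W.CoordinateRing W.FunctionField a) ≤ e 1 := by
  intro n
  induction n with
  | zero =>
    intro h hh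
    refine ⟨0, by rw [E_zero]; exact zero_le' _, ?_⟩
    rw [map_zero, sub_zero]
    have he : ((0 : ℕ) : ℤ) + 1 = 1 := by norm_num
    rwa [he] at hh
  | succ n ih =>
    intro h hh
    by_cases hle : ν h ≤ e ((n : ℤ) + 1)
    · obtain ⟨a, ha1, ha2⟩ := ih h hle
      exact ⟨a, le_trans ha1 (e_le_e.mpr (by push_cast; omega)), ha2⟩
    · have hh0 : ν h ≠ 0 := fun h0 => hle (by rw [h0]; exact zero_le' _)
      obtain ⟨k, hk⟩ := exists_e hh0
      have hkeq : k = (n : ℤ) + 2 := by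
        rw [hk, e_le_e] at hh hle
        push_cast at hh
        omega
      obtain ⟨m, hm⟩ := monomial_exists ν hconst hneg hsurj (n + 2) (by omega)
      have hφm : algebraMap W.CoordinateRing W.FunctionField m ≠ 0 := by
        intro h0
        rw [EE_def, h0, map_zero] at hm
        exact (e_ne_zero _) hm.symm
      have hνφm : ν (algebraMap W.CoordinateRing W.FunctionField m) = e ((n : ℤ) + 2) := by
        rw [← EE_def, hm]
        congr 1 <;> push_cast <;> ring
      obtain ⟨c, hc⟩ := resid ν hconst hres h (algebraMap W.CoordinateRing W.FunctionField m)
        hφm (by rw [hk, hkeq, hνφm])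
      rw [hνφm] at hc
      have hred : ν (h - algebraMap W.CoordinateRing W.FunctionField
          (algebraMap Fq W.CoordinateRing c) * algebraMap W.CoordinateRing W.FunctionField m) ≤
          e ((n : ℤ) + 1) := by
        have := lt_e_iff.mp hc
        exact le_trans this (e_le_e.mpr (by omega))
      obtain ⟨a', ha1, ha2⟩ := ih _ hred
      refine ⟨algebraMap Fq W.CoordinateRing c * m + a', ?_, ?_⟩
      · apply le_trans (E_add_le ν _ _)
        apply max_le
        · apply le_trans (E_C_mul_le ν hconst c m)
          rw [hm]
          exact e_le_e.mpr (by push_cast; omega)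
        · exact le_trans ha1 (e_le_e.mpr (by push_cast; omega))
      · have heq : h - algebraMap W.CoordinateRing W.FunctionField
            (algebraMap Fq W.CoordinateRing c * m + a') =
            (h - algebraMap W.CoordinateRing W.FunctionField
              (algebraMap Fq W.CoordinateRing c) * algebraMap W.CoordinateRing W.FunctionField m)
              - algebraMap W.CoordinateRing W.FunctionField a' := by
          rw [RingHom.map_add, RingHom.map_mul]
          ring
        rw [heq]
        exact ha2

noncomputable def pick (hsurj : Function.Surjective ν) (k : ℤ) : W.FunctionField :=
  (hsurj (e k)).choose

lemma pick_spec (k : ℤ) : ν (pick ν hsurj k) = e k := (hsurj (e k)).choose_spec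

include hconst hres in
lemma peel_exists (k : ℤ) (h : W.FunctionField) (hh : ν h ≤ e k) :
    ∃ c : Fq, ν (h - algebraMap W.CoordinateRing W.FunctionField
      (algebraMap Fq W.CoordinateRing c) * pick ν hsurj k) ≤ e (k - 1) := by
  have hp : ν (pick ν hsurj k) = e k := pick_spec ν hsurj k
  rcases lt_or_eq_of_le hh with hlt | heq
  · refine ⟨0, ?_⟩
    rw [map_zero, map_zero, zero_mul, sub_zero]
    exact lt_e_iff.mp hlt
  · have hp0 : pick ν hsurj k ≠ 0 := by
      intro h0
      rw [h0, map_zero] at hp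
      exact (e_ne_zero _) hp.symm
    obtain ⟨c, hc⟩ := resid ν hconst hres h (pick ν hsurj k) hp0 (by rw [heq, hp])
    rw [hp] at hc
    exact ⟨c, lt_e_iff.mp hc⟩

noncomputable def pc
    (hconst : ∀ c : Fq, c ≠ 0 →
      ν (algebraMap W.CoordinateRing W.FunctionField (algebraMap Fq W.CoordinateRing c)) = 1)
    (hsurj : Function.Surjective ν)
    (hres : Nat.card (IsLocalRing.ResidueField ν.valuationSubring) = Fintype.card Fq)
    (k : ℤ) (h : W.FunctionField) : Fq :=
  if hh : ν h ≤ e k then (peel_exists ν hconst hsurj hres k h hh).choose else 0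

lemma pc_spec (k : ℤ) (h : W.FunctionField) (hh : ν h ≤ e k) :
    ν (h - algebraMap W.CoordinateRing W.FunctionField
      (algebraMap Fq W.CoordinateRing (pc ν hconst hsurj hres k h)) * pick ν hsurj k) ≤
      e (k - 1) := by
  rw [pc, dif_pos hh]
  exact (peel_exists ν hconst hsurj hres k h hh).choose_spec

noncomputable def rem
    (hconst : ∀ c : Fq, c ≠ 0 →
      ν (algebraMap W.CoordinateRing W.FunctionField (algebraMap Fq W.CoordinateRing c)) = 1)
    (hsurj : Function.Surjective ν)
    (hres : Nat.card (IsLocalRing.ResidueField ν.valuationSubring) = Fintype.card Fq)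
    (h : W.FunctionField) : ℕ → W.FunctionField
  | 0 => h
  | (j + 1) => rem hconst hsurj hres h j -
      algebraMap W.CoordinateRing W.FunctionField (algebraMap Fq W.CoordinateRing
        (pc ν hconst hsurj hres (1 - j) (rem hconst hsurj hres h j))) * pick ν hsurj (1 - j)

lemma rem_bound (h : W.FunctionField) (hh : ν h ≤ e 1) :
    ∀ j : ℕ, ν (rem ν hconst hsurj hres h j) ≤ e (1 - j) := by
  intro j
  induction j with
  | zero => simpa [rem] using hh
  | succ j ih =>
    have := pc_spec ν hconst hsurj hres (1 - j) (rem ν hconst hsurj hres h j) ih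
    rw [rem]
    apply le_trans this
    rw [e_le_e]
    push_cast
    omega

/-- digits of the truncation -/
noncomputable def digits
    (hconst : ∀ c : Fq, c ≠ 0 →
      ν (algebraMap W.CoordinateRing W.FunctionField (algebraMap Fq W.CoordinateRing c)) = 1)
    (hsurj : Function.Surjective ν)
    (hres : Nat.card (IsLocalRing.ResidueField ν.valuationSubring) = Fintype.card Fq)
    (h : W.FunctionField) (j : ℕ) : Fq :=
  pc ν hconst hsurj hres (1 - j) (rem ν hconst hsurj hres h j)

lemma digits_eq_imp (h h' : W.FunctionField) (hh : ν h ≤ e 1) (hh' : ν h' ≤ e 1) (m : ℕ)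
    (hd : ∀ j < m, digits ν hconst hsurj hres h j = digits ν hconst hsurj hres h' j) :
    ν (h - h') ≤ e (1 - m) := by
  have key : ∀ J : ℕ, J ≤ m → rem ν hconst hsurj hres h J - rem ν hconst hsurj hres h' J
      = h - h' := by
    intro J
    induction J with
    | zero => intro _; rfl
    | succ J ih =>
      intro hJ
      have hdj := hd J (by omega)
      simp only [digits] at hdj
      have hih := ih (by omega)
      simp only [rem]
      rw [hdj]
      linear_combination hih
  have h1 : ν (rem ν hconst hsurj hres h m - rem ν hconst hsurj hres h' m) ≤ e (1 - m) := by
    apply le_trans (ν.map_sub _ _)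
    apply max_le (rem_bound ν hconst hsurj hres h hh m) (rem_bound ν hconst hsurj hres h' hh' m)
  rw [key m le_rfl] at h1
  exact h1


variable (hnosol : ∀ x y : Fq,
    y ^ 2 + W.a₁ * x * y + W.a₃ * y ≠ x ^ 3 + W.a₂ * x ^ 2 + W.a₄ * x + W.a₆)

include hconst hneg hsurj hres hnosol in
lemma no_gap (b r : W.CoordinateRing) (hb : b ≠ 0) (hr : r ≠ 0) {d : ℕ}
    (hbd : EE ν b = e d) (hrd : EE ν r = e ((d : ℤ) + 1))
    (hmin : ∀ w : W.CoordinateRing, w ∈ Ideal.span {b, r} → w ≠ 0 → e d ≤ EE ν w)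
    (hnotin : r ∉ Ideal.span {b}) : False := by
  have hbmem : b ∈ Ideal.span {b, r} := Ideal.subset_span (by simp)
  have hrmem : r ∈ Ideal.span {b, r} := Ideal.subset_span (by simp)
  -- step: elements of the pair-ideal with value e d are constant multiples of b
  have stepd : ∀ w : W.CoordinateRing, w ∈ Ideal.span {b, r} → EE ν w = e d →
      ∃ c₀ : Fq, w = algebraMap Fq W.CoordinateRing c₀ * b := by
    intro w hwI hwd
    obtain ⟨c₀, hc₀⟩ := residA ν hconst hres w b hb (by rw [hwd, hbd])
    rw [hbd] at hc₀
    refine ⟨c₀, ?_⟩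
    by_contra hne2
    have hne2' : w - algebraMap Fq W.CoordinateRing c₀ * b ≠ 0 := fun h0 => hne2 (by
      have := sub_eq_zero.mp h0; exact this)
    have hw2I : w - algebraMap Fq W.CoordinateRing c₀ * b ∈ Ideal.span {b, r} :=
      Ideal.sub_mem _ hwI (Ideal.mul_mem_left _ _ hbmem)
    exact (not_lt.mpr (hmin _ hw2I hne2')) hc₀
  -- main claim: every z * r is congruent to a constant multiple of r mod (b)
  have main : ∀ z : W.CoordinateRing, ∃ c : Fq,
      z * r - algebraMap Fq W.CoordinateRing c * r ∈ Ideal.span {b} := by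
    intro z
    obtain ⟨s, hs⟩ := division ν hconst hneg hsurj hres b hb (z * r)
    set w₁ := z * r - s * b with hw₁def
    have hw₁I : w₁ ∈ Ideal.span {b, r} :=
      Ideal.sub_mem _ (Ideal.mul_mem_left _ _ hrmem) (Ideal.mul_mem_left _ _ hbmem)
    rcases eq_or_ne w₁ 0 with h0 | hne
    · refine ⟨0, ?_⟩
      rw [map_zero, zero_mul, sub_zero]
      refine Ideal.mem_span_singleton.mpr ⟨s, ?_⟩
      have : z * r - s * b = 0 := h0
      linear_combination this
    · obtain ⟨k₁, hk₁, _⟩ := E_vals ν hconst hneg hsurj w₁ hne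
      have hk₁low : (d : ℤ) ≤ (k₁ : ℤ) := by
        have := hmin w₁ hw₁I hne
        rw [hk₁, e_le_e] at this
        exact this
      have hk₁high : (k₁ : ℤ) ≤ (d : ℤ) + 1 := by
        rw [hk₁, hbd, ← e_add] at hs
        rw [← e_le_e]
        exact hs
      rcases (by omega : k₁ = d ∨ (k₁ : ℤ) = (d : ℤ) + 1) with hcase | hcase
      · obtain ⟨c₀, hc₀⟩ := stepd w₁ hw₁I (by rw [hk₁, hcase])
        refine ⟨0, ?_⟩
        rw [map_zero, zero_mul, sub_zero]
        refine Ideal.mem_span_singleton.mpr ⟨s + algebraMap Fq W.CoordinateRing c₀, ?_⟩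
        linear_combination hc₀
      · obtain ⟨c, hc⟩ := residA ν hconst hres w₁ r hr (by rw [hk₁, hcase, hrd])
        rw [hrd] at hc
        set w₂ := w₁ - algebraMap Fq W.CoordinateRing c * r with hw₂def
        have hw₂I : w₂ ∈ Ideal.span {b, r} :=
          Ideal.sub_mem _ hw₁I (Ideal.mul_mem_left _ _ hrmem)
        rcases eq_or_ne w₂ 0 with h0 | hne2
        · refine ⟨c, ?_⟩
          refine Ideal.mem_span_singleton.mpr ⟨s, ?_⟩
          have : w₁ - algebraMap Fq W.CoordinateRing c * r = 0 := h0
          linear_combination this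
        · have hk₂ : EE ν w₂ = e d := by
            obtain ⟨k₂, hk₂, _⟩ := E_vals ν hconst hneg hsurj w₂ hne2
            have hlow := hmin w₂ hw₂I hne2
            rw [hk₂, e_le_e] at hlow
            have hhigh : (k₂ : ℤ) ≤ (d : ℤ) := by
              have := lt_e_iff.mp hc
              rw [hk₂, e_le_e] at this
              omega
            rw [hk₂]
            congr 1
            omega
          obtain ⟨c₀, hc₀⟩ := stepd w₂ hw₂I hk₂
          refine ⟨c, ?_⟩
          refine Ideal.mem_span_singleton.mpr ⟨s + algebraMap Fq W.CoordinateRing c₀, ?_⟩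
          linear_combination hc₀
  -- the conductor ideal J
  set J : Ideal W.CoordinateRing := Submodule.colon (Ideal.span {b}) (Ideal.span {r}) with hJdef
  have hJne : J ≠ ⊤ := by
    intro htop
    have h1 : (1 : W.CoordinateRing) ∈ J := htop ▸ Submodule.mem_top
    rw [hJdef, Ideal.mem_colon_span_singleton, one_mul] at h1
    exact hnotin h1
  haveI : Nontrivial (W.CoordinateRing ⧸ J) := Ideal.Quotient.nontrivial_iff.mpr hJne
  set κ : Fq →+* W.CoordinateRing ⧸ J :=
    (Ideal.Quotient.mk J).comp (algebraMap Fq W.CoordinateRing) with hκdef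
  have hκinj : Function.Injective κ := κ.injective
  have hκsurj : Function.Surjective κ := by
    intro zq
    obtain ⟨z, rfl⟩ := Ideal.Quotient.mk_surjective zq
    obtain ⟨c, hc⟩ := main z
    refine ⟨c, ?_⟩
    have hz : z - algebraMap Fq W.CoordinateRing c ∈ J := by
      rw [hJdef, Ideal.mem_colon_span_singleton, sub_mul]
      exact hc
    have : κ c = Ideal.Quotient.mk J (algebraMap Fq W.CoordinateRing c) := rfl
    rw [this]
    exact ((Ideal.Quotient.mk_eq_mk_iff_sub_mem _ _).mpr hz).symm
  set ρ0 := RingEquiv.ofBijective κ ⟨hκinj, hκsurj⟩ with hρ0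
  set ρ : W.CoordinateRing →+* Fq :=
    (ρ0.symm : W.CoordinateRing ⧸ J ≃+* Fq).toRingHom.comp (Ideal.Quotient.mk J) with hρdef
  have hρc : ∀ c : Fq, ρ (algebraMap Fq W.CoordinateRing c) = c := by
    intro c
    show ρ0.symm (Ideal.Quotient.mk J (algebraMap Fq W.CoordinateRing c)) = c
    have : Ideal.Quotient.mk J (algebraMap Fq W.CoordinateRing c) = ρ0 c := rfl
    rw [this, RingEquiv.symm_apply_apply]
  -- extract the rational point
  have hrel := curve_rel (W := W)
  have hexp1 : PX W (Polynomial.C W.a₁ * X + Polynomial.C W.a₃) =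
      algebraMap Fq W.CoordinateRing W.a₁ * PX W X + algebraMap Fq W.CoordinateRing W.a₃ := by
    rw [cA_eq, cA_eq, map_add, map_mul]
  have hexp2 : PX W (X ^ 3 + Polynomial.C W.a₂ * X ^ 2 + Polynomial.C W.a₄ * X +
      Polynomial.C W.a₆) = (PX W X) ^ 3 + algebraMap Fq W.CoordinateRing W.a₂ * (PX W X) ^ 2 +
      algebraMap Fq W.CoordinateRing W.a₄ * PX W X + algebraMap Fq W.CoordinateRing W.a₆ := by
    rw [cA_eq, cA_eq, cA_eq]
    simp only [map_add, map_mul, map_pow]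
  rw [hexp1, hexp2] at hrel
  have hpoint := congrArg ρ hrel
  simp only [map_mul, map_add, map_pow, hρc] at hpoint
  exact hnosol (ρ (PX W X)) (ρ (yA W)) (by linear_combination hpoint)

include hconst hneg hsurj hres hnosol in
lemma coprime_rep (f₀ g₀ : W.CoordinateRing) (hg₀ : g₀ ≠ 0) :
    ∃ dd f g : W.CoordinateRing, f₀ = dd * f ∧ g₀ = dd * g ∧ g ≠ 0 ∧
      Ideal.span {f, g} = ⊤ ∧ EE ν g ≤ EE ν g₀ := by
  classical
  set I := Ideal.span {f₀, g₀} with hIdef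
  have hf₀I : f₀ ∈ I := Ideal.subset_span (by simp)
  have hg₀I : g₀ ∈ I := Ideal.subset_span (by simp)
  have hex : ∃ k : ℕ, ∃ a, a ∈ I ∧ a ≠ 0 ∧ EE ν a = e k := by
    obtain ⟨k, hk, _⟩ := E_vals ν hconst hneg hsurj g₀ hg₀
    exact ⟨k, g₀, hg₀I, hg₀, hk⟩
  set d := Nat.find hex with hddef
  obtain ⟨b, hbI, hb0, hbd⟩ := Nat.find_spec hex
  have hmin : ∀ w, w ∈ I → w ≠ 0 → e d ≤ EE ν w := by
    intro w hw hw0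
    obtain ⟨k, hk, _⟩ := E_vals ν hconst hneg hsurj w hw0
    rw [hk, e_le_e]
    have hnotlt : ¬ k < d := fun hlt => Nat.find_min hex hlt ⟨w, hw, hw0, hk⟩
    omega
  have stepd : ∀ a, a ∈ I → a ≠ 0 → EE ν a = e d → a ∈ Ideal.span {b} := by
    intro a haI ha0 had
    obtain ⟨c₀, hc₀⟩ := residA ν hconst hres a b hb0 (by rw [had, hbd])
    rw [hbd] at hc₀
    have hZ : a - algebraMap Fq W.CoordinateRing c₀ * b = 0 := by
      by_contra hne2
      have hw2I : a - algebraMap Fq W.CoordinateRing c₀ * b ∈ I :=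
        Ideal.sub_mem _ haI (Ideal.mul_mem_left _ _ hbI)
      exact (not_lt.mpr (hmin _ hw2I hne2)) hc₀
    refine Ideal.mem_span_singleton.mpr ⟨algebraMap Fq W.CoordinateRing c₀, ?_⟩
    linear_combination hZ
  have main : ∀ a, a ∈ I → a ∈ Ideal.span {b} := by
    suffices H : ∀ n : ℕ, ∀ a, a ∈ I → EE ν a ≤ e n → a ∈ Ideal.span {b} by
      intro a haI
      rcases eq_or_ne a 0 with rfl | ha0
      · exact Ideal.zero_mem _
      · obtain ⟨k, hk, _⟩ := E_vals ν hconst hneg hsurj a ha0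
        exact H k a haI (le_of_eq hk)
    intro n
    induction n with
    | zero =>
      intro a haI ha
      rcases eq_or_ne a 0 with rfl | ha0
      · exact Ideal.zero_mem _
      · obtain ⟨k, hk, _⟩ := E_vals ν hconst hneg hsurj a ha0
        have hk0 : k = 0 := by
          rw [hk, e_le_e] at ha
          omega
        have hd0 : d = 0 := by
          have := hmin a haI ha0
          rw [hk, e_le_e, hk0] at this
          omega
        exact stepd a haI ha0 (by rw [hk, hk0, hd0])
    | succ n ih =>
      intro a haI ha
      rcases eq_or_ne a 0 with rfl | ha0
      · exact Ideal.zero_mem _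
      obtain ⟨k, hk, _⟩ := E_vals ν hconst hneg hsurj a ha0
      have hdk : d ≤ k := by
        have := hmin a haI ha0
        rw [hk, e_le_e] at this
        omega
      have hkn : (k : ℤ) ≤ (n : ℤ) + 1 := by
        rw [hk, e_le_e] at ha
        push_cast at ha
        omega
      rcases (by omega : k = d ∨ k = d + 1 ∨ d + 2 ≤ k) with hcase | hcase | hcase
      · exact stepd a haI ha0 (by rw [hk, hcase])
      · by_cases hspan : a ∈ Ideal.span {b}
        · exact hspan
        · exfalso
          have hsub : Ideal.span {b, a} ≤ I := by
            apply Ideal.span_le.mpr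
            intro w hw
            rcases hw with rfl | hw
            · exact hbI
            · rw [Set.mem_singleton_iff] at hw
              subst hw
              exact haI
          exact no_gap ν hconst hneg hsurj hres hnosol b a hb0 ha0 hbd
            (by rw [hk, hcase]; congr 1 <;> push_cast <;> ring)
            (fun w hw hw0 => hmin w (hsub hw) hw0) hspan
      · obtain ⟨m, hm⟩ := monomial_exists ν hconst hneg hsurj (k - d) (by omega)
        have hm0 : m ≠ 0 := by
          intro h0
          rw [h0, E_zero] at hm
          exact (e_ne_zero _) hm.symm
        have hmb : EE ν (m * b) = e k := by
          rw [E_mul, hm, hbd, ← e_add]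
          congr 1
          push_cast
          omega
        obtain ⟨c, hc⟩ := residA ν hconst hres a (m * b) (mul_ne_zero hm0 hb0)
          (by rw [hk, hmb])
        rw [hmb] at hc
        set a' := a - algebraMap Fq W.CoordinateRing c * (m * b) with ha'def
        have ha'I : a' ∈ I := Ideal.sub_mem _ haI (Ideal.mul_mem_left _ _
          (Ideal.mul_mem_left _ _ hbI))
        have ha'le : EE ν a' ≤ e n := by
          have h1 := lt_e_iff.mp hc
          exact le_trans h1 (e_le_e.mpr (by omega))
        have ha'span := ih a' ha'I ha'le
        have : a = a' + algebraMap Fq W.CoordinateRing c * m * b := by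
          rw [ha'def]
          ring
        rw [this]
        exact Ideal.add_mem _ ha'span (Ideal.mul_mem_left _ _
          (Ideal.mem_span_singleton.mpr dvd_rfl))
  obtain ⟨f, hf⟩ := Ideal.mem_span_singleton.mp (main f₀ hf₀I)
  obtain ⟨g, hg⟩ := Ideal.mem_span_singleton.mp (main g₀ hg₀I)
  have hgne : g ≠ 0 := by
    rintro rfl
    rw [mul_zero] at hg
    exact hg₀ hg
  obtain ⟨w₁, w₂, hw⟩ := Ideal.mem_span_pair.mp (show b ∈ Ideal.span {f₀, g₀} from hbI)
  rw [hf, hg] at hw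
  have hcan : b * (f * w₁ + g * w₂) = b * 1 := by linear_combination hw
  have hone := mul_left_cancel₀ hb0 hcan
  refine ⟨b, f, g, hf, hg, hgne, ?_, ?_⟩
  · rw [Ideal.eq_top_iff_one]
    exact Ideal.mem_span_pair.mpr ⟨w₁, w₂, by linear_combination hone⟩
  · rw [hg, E_mul]
    calc EE ν g = 1 * EE ν g := (one_mul _).symm
      _ ≤ EE ν b * EE ν g := by
          apply mul_le_mul_left
          rw [hbd, ← e_zero]
          exact e_le_e.mpr (by omega)


open scoped Classical in
include hconst hneg hsurj hres in
lemma dval_le (p s : Fq[X]) (D : ℕ) (hp : 2 * p.natDegree ≤ D)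
    (hs : 2 * s.natDegree + 3 ≤ D) : dval p s ≤ e D := by
  apply max_le
  · split
    · exact zero_le' _
    · exact e_le_e.mpr (by push_cast; omega)
  · split
    · exact zero_le' _
    · exact e_le_e.mpr (by push_cast; omega)

include hconst hneg hsurj hres hnosol in
lemma approx (m : ℕ) (h₀ : W.FunctionField) (hh₀ : ν h₀ ≤ 1) :
    ∃ f g : W.CoordinateRing, g ≠ 0 ∧ Ideal.span {f, g} = ⊤ ∧ EE ν g ≤ e ((m : ℤ) + 3) ∧
      ν (algebraMap W.CoordinateRing W.FunctionField g * h₀ -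
        algebraMap W.CoordinateRing W.FunctionField f) ≤ e (-(m : ℤ) - 1) := by
  classical
  set D := m + 3 with hDdef
  set aa := D / 2 + 1 with haadef
  set bb := D - D / 2 - 1 with hbbdef
  have hab : aa + bb = D := by omega
  have haa2 : 2 * (aa - 1) ≤ D := by omega
  have hbb2 : 2 * (bb - 1) + 3 ≤ D := by omega
  set P1 : (Fin aa → Fq) → Fq[X] :=
    fun v => ((Polynomial.degreeLTEquiv Fq aa).symm v : Polynomial.degreeLT Fq aa) with hP1
  set P2 : (Fin bb → Fq) → Fq[X] :=
    fun v => ((Polynomial.degreeLTEquiv Fq bb).symm v : Polynomial.degreeLT Fq bb) with hP2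
  have hP1inj : Function.Injective P1 := by
    intro v v' hvv
    have := Subtype.ext (p := fun x => x ∈ Polynomial.degreeLT Fq aa) hvv
    exact (Polynomial.degreeLTEquiv Fq aa).symm.injective this
  have hP2inj : Function.Injective P2 := by
    intro v v' hvv
    have := Subtype.ext (p := fun x => x ∈ Polynomial.degreeLT Fq bb) hvv
    exact (Polynomial.degreeLTEquiv Fq bb).symm.injective this
  have hP1deg : ∀ v, (P1 v).natDegree ≤ aa - 1 := by
    intro v
    have hmem := ((Polynomial.degreeLTEquiv Fq aa).symm v).2
    rw [Polynomial.mem_degreeLT] at hmem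
    rcases eq_or_ne (P1 v) 0 with h0 | h0
    · rw [h0]; simp
    · have := (Polynomial.natDegree_lt_iff_degree_lt h0).mpr hmem
      omega
  have hP2deg : ∀ v, (P2 v).natDegree ≤ bb - 1 := by
    intro v
    have hmem := ((Polynomial.degreeLTEquiv Fq bb).symm v).2
    rw [Polynomial.mem_degreeLT] at hmem
    rcases eq_or_ne (P2 v) 0 with h0 | h0
    · rw [h0]; simp
    · have := (Polynomial.natDegree_lt_iff_degree_lt h0).mpr hmem
      omega
  set Φ : ((Fin aa → Fq) × (Fin bb → Fq)) → W.CoordinateRing :=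
    fun t => PX W (P1 t.1) + PX W (P2 t.2) * yA W with hΦ
  have hΦinj : Function.Injective Φ := by
    intro t t' htt
    have hzero : PX W (P1 t.1 - P1 t'.1) + PX W (P2 t.2 - P2 t'.2) * yA W = 0 := by
      rw [map_sub, map_sub]
      have : Φ t = Φ t' := htt
      rw [hΦ] at this
      linear_combination this
    obtain ⟨h1, h2⟩ := repr_zero hzero
    have e1 : P1 t.1 = P1 t'.1 := by rwa [sub_eq_zero] at h1
    have e2 : P2 t.2 = P2 t'.2 := by rwa [sub_eq_zero] at h2
    exact Prod.ext (hP1inj e1) (hP2inj e2)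
  have hΦbound : ∀ t, EE ν (Φ t) ≤ e D := by
    intro t
    rw [hΦ]
    rw [master ν hconst hneg hsurj (P1 t.1) (P2 t.2)]
    apply dval_le ν hconst hneg hsurj hres
    · have := hP1deg t.1; omega
    · have := hP2deg t.2; omega
  -- reduction for each box element
  have hred : ∀ t, ∃ a : W.CoordinateRing, EE ν a ≤ e (((m + 2 : ℕ) : ℤ) + 1) ∧
      ν (algebraMap W.CoordinateRing W.FunctionField (Φ t) * h₀ -
        algebraMap W.CoordinateRing W.FunctionField a) ≤ e 1 := by
    intro t
    apply reduction ν hconst hneg hsurj hres (m + 2)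
    have h1 : ν (algebraMap W.CoordinateRing W.FunctionField (Φ t) * h₀) ≤ e D * 1 := by
      rw [map_mul]
      exact mul_le_mul' (hΦbound t) hh₀
    rw [mul_one] at h1
    apply le_trans h1
    exact e_le_e.mpr (by push_cast; omega)
  choose red hredE hredV using hred
  set r : ((Fin aa → Fq) × (Fin bb → Fq)) → W.FunctionField :=
    fun t => algebraMap W.CoordinateRing W.FunctionField (Φ t) * h₀ -
      algebraMap W.CoordinateRing W.FunctionField (red t) with hrdef
  set dig : ((Fin aa → Fq) × (Fin bb → Fq)) → (Fin (m + 2) → Fq) :=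
    fun t j => digits ν hconst hsurj hres (r t) j with hdig
  have hq2 : 1 < Fintype.card Fq := Fintype.one_lt_card
  have hcards : Fintype.card (Fin (m + 2) → Fq) <
      Fintype.card ((Fin aa → Fq) × (Fin bb → Fq)) := by
    rw [Fintype.card_prod, Fintype.card_fun, Fintype.card_fun, Fintype.card_fun,
      Fintype.card_fin, Fintype.card_fin, Fintype.card_fin, ← pow_add, hab]
    exact Nat.pow_lt_pow_right hq2 (by omega)
  obtain ⟨t, t', htne, hteq⟩ := Fintype.exists_ne_map_eq_of_card_lt dig hcards
  set g₁ := Φ t - Φ t' with hg₁def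
  set f₁ := red t - red t' with hf₁def
  have hg₁0 : g₁ ≠ 0 := sub_ne_zero.mpr (fun h => htne (hΦinj h))
  have hrr : algebraMap W.CoordinateRing W.FunctionField g₁ * h₀ -
      algebraMap W.CoordinateRing W.FunctionField f₁ = r t - r t' := by
    rw [hg₁def, hf₁def, RingHom.map_sub, RingHom.map_sub, hrdef]
    ring
  have hvalr : ν (r t - r t') ≤ e (1 - ((m + 2 : ℕ) : ℤ)) := by
    apply digits_eq_imp ν hconst hsurj hres (r t) (r t') (hredV t) (hredV t') (m + 2)
    intro j hj
    have := congrFun hteq ⟨j, hj⟩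
    rw [hdig] at this
    exact this
  have hval : ν (algebraMap W.CoordinateRing W.FunctionField g₁ * h₀ -
      algebraMap W.CoordinateRing W.FunctionField f₁) ≤ e (-(m : ℤ) - 1) := by
    rw [hrr]
    apply le_trans hvalr
    exact e_le_e.mpr (by push_cast; omega)
  have hg₁E : EE ν g₁ ≤ e ((m : ℤ) + 3) := by
    rw [hg₁def]
    apply le_trans (E_sub_le ν _ _)
    apply max_le (hΦbound t) (hΦbound t')
      |>.trans (e_le_e.mpr (by push_cast; omega))
  obtain ⟨dd, f, g, hfdd, hgdd, hgne, hspan, hEg⟩ :=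
    coprime_rep ν hconst hneg hsurj hres hnosol f₁ g₁ hg₁0
  have hdd0 : dd ≠ 0 := by
    rintro rfl
    rw [zero_mul] at hgdd
    exact hg₁0 hgdd
  refine ⟨f, g, hgne, hspan, le_trans hEg hg₁E, ?_⟩
  have hfact : algebraMap W.CoordinateRing W.FunctionField g₁ * h₀ -
      algebraMap W.CoordinateRing W.FunctionField f₁ =
      algebraMap W.CoordinateRing W.FunctionField dd *
        (algebraMap W.CoordinateRing W.FunctionField g * h₀ -
          algebraMap W.CoordinateRing W.FunctionField f) := by
    rw [hfdd, hgdd, RingHom.map_mul, RingHom.map_mul]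
    ring
  have hEdd : (1 : ℤₘ₀) ≤ EE ν dd := by
    obtain ⟨k, hk, _⟩ := E_vals ν hconst hneg hsurj dd hdd0
    rw [hk, ← e_zero]
    exact e_le_e.mpr (by omega)
  calc ν (algebraMap W.CoordinateRing W.FunctionField g * h₀ -
        algebraMap W.CoordinateRing W.FunctionField f)
      = 1 * ν (algebraMap W.CoordinateRing W.FunctionField g * h₀ -
        algebraMap W.CoordinateRing W.FunctionField f) := (one_mul _).symm
    _ ≤ EE ν dd * ν (algebraMap W.CoordinateRing W.FunctionField g * h₀ -
        algebraMap W.CoordinateRing W.FunctionField f) := mul_le_mul_left hEdd _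
    _ = ν (algebraMap W.CoordinateRing W.FunctionField g₁ * h₀ -
        algebraMap W.CoordinateRing W.FunctionField f₁) := by
        rw [hfact, map_mul, EE_def]
    _ ≤ e (-(m : ℤ) - 1) := hval

end Curve
end ECApprox

variable (Fq : Type) [Field Fq] [Fintype Fq]

set_option maxHeartbeats 1000000 in
/-- Example 8.7, case (1): for an elliptic curve over `F_q` whose Weierstrass
equation has no `F_q`-rational affine solutions, every `α ∈ O_∞` is `(-4)`-approximable. -/
theorem neg_four_approximable_of_no_rational_point (q : ℕ) (hq : Fintype.card Fq = q)
    (W : WeierstrassCurve Fq) (hΔ : W.Δ ≠ 0)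
    (hnosol : ∀ x y : Fq,
      y ^ 2 + W.a₁ * x * y + W.a₃ * y ≠ x ^ 3 + W.a₂ * x ^ 2 + W.a₄ * x + W.a₆)
    (ν : Valuation W.toAffine.FunctionField ℤₘ₀)
    (hsurj : Function.Surjective ν)
    (hconst : ∀ c : Fq, c ≠ 0 →
      ν (algebraMap W.toAffine.CoordinateRing W.toAffine.FunctionField
        (algebraMap Fq W.toAffine.CoordinateRing c)) = 1)
    (hneg : ∀ a : W.toAffine.CoordinateRing, (∀ c : Fq, a ≠ algebraMap Fq _ c) →
      1 < ν (algebraMap W.toAffine.CoordinateRing W.toAffine.FunctionField a))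
    (hres : Nat.card (IsLocalRing.ResidueField ν.valuationSubring) = q) :
    letI : Valued W.toAffine.FunctionField ℤₘ₀ := Valued.mk' ν
    letI : Valued (UniformSpace.Completion W.toAffine.FunctionField) ℤₘ₀ :=
      Valued.valuedCompletion
    ∀ α : UniformSpace.Completion W.toAffine.FunctionField,
      zabs q (Valued.v α) ≤ 1 →
      ∃ f g : ℕ → W.toAffine.CoordinateRing,
        (∀ n, g n ≠ 0 ∧
          Ideal.span {f n, g n} = (⊤ : Ideal W.toAffine.CoordinateRing) ∧
          zabs q (Valued.v (α -
            (UniformSpace.Completion.coe' (α := W.toAffine.FunctionField)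
              (algebraMap W.toAffine.CoordinateRing W.toAffine.FunctionField (f n) /
                algebraMap W.toAffine.CoordinateRing W.toAffine.FunctionField (g n))))) <
            (q : ℝ) ^ (4 : ℕ) /
              zabs q (ν (algebraMap W.toAffine.CoordinateRing W.toAffine.FunctionField
                (g n))) ^ 2) ∧
        Tendsto (fun n => UniformSpace.Completion.coe' (α := W.toAffine.FunctionField)
            (algebraMap W.toAffine.CoordinateRing W.toAffine.FunctionField (f n) /
              algebraMap W.toAffine.CoordinateRing W.toAffine.FunctionField (g n)))
          atTop (nhds α) := by
  letI instK : Valued W.toAffine.FunctionField ℤₘ₀ := Valued.mk' ν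
  letI instKhat : Valued (UniformSpace.Completion W.toAffine.FunctionField) ℤₘ₀ :=
    Valued.valuedCompletion
  intro α hα
  classical
  have hq2 : 1 < q := by rw [← hq]; exact Fintype.one_lt_card
  have hq2R : (1 : ℝ) < (q : ℝ) := by exact_mod_cast hq2
  have hq1R : (1 : ℝ) ≤ (q : ℝ) := le_of_lt hq2R
  have hq0R : (0 : ℝ) < (q : ℝ) := by linarith
  have hres' : Nat.card (IsLocalRing.ResidueField ν.valuationSubring) = Fintype.card Fq := by
    rw [hres, hq]
  have hvcoe : ∀ x : W.toAffine.FunctionField,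
      (Valued.v (UniformSpace.Completion.coe' (α := W.toAffine.FunctionField) x) : ℤₘ₀) = ν x :=
    fun x => Valued.valuedCompletion_apply x
  have hα1 : (Valued.v α : ℤₘ₀) ≤ ECApprox.e 0 := ECApprox.zabs_le_one_imp hq2R hα
  have key : ∀ n : ℕ, ∃ fg : W.toAffine.CoordinateRing × W.toAffine.CoordinateRing,
      fg.2 ≠ 0 ∧ Ideal.span {fg.1, fg.2} = (⊤ : Ideal W.toAffine.CoordinateRing) ∧
      zabs q (Valued.v (α - (UniformSpace.Completion.coe' (α := W.toAffine.FunctionField)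
        (algebraMap W.toAffine.CoordinateRing W.toAffine.FunctionField fg.1 /
          algebraMap W.toAffine.CoordinateRing W.toAffine.FunctionField fg.2)))) <
        (q : ℝ) ^ (4 : ℕ) / zabs q (ν (algebraMap W.toAffine.CoordinateRing
          W.toAffine.FunctionField fg.2)) ^ 2 ∧
      (Valued.v (α - (UniformSpace.Completion.coe' (α := W.toAffine.FunctionField)
        (algebraMap W.toAffine.CoordinateRing W.toAffine.FunctionField fg.1 /
          algebraMap W.toAffine.CoordinateRing W.toAffine.FunctionField fg.2))) : ℤₘ₀) ≤
        ECApprox.e (-(n : ℤ) - 1) := by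
    intro n
    obtain ⟨x0, hx0⟩ := hsurj (ECApprox.e (-(2 * (n : ℤ) + 20)))
    have hx0' : (Valued.v (UniformSpace.Completion.coe' (α := W.toAffine.FunctionField) x0) :
        ℤₘ₀) = ECApprox.e (-(2 * (n : ℤ) + 20)) := (hvcoe x0).trans hx0
    have hball : {z | (Valued.v (z - α) : ℤₘ₀) < ECApprox.e (-(2 * (n : ℤ) + 20))} ∈ nhds α :=
      Valued.mem_nhds.mpr ⟨Units.mk0 (Valued.v.restrict
          (UniformSpace.Completion.coe' (α := W.toAffine.FunctionField) x0))
          (by rw [ne_eq, Valuation.restrict_eq_zero_iff, hx0']; exact ECApprox.e_ne_zero _),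
        fun z hz => by
          show (Valued.v (z - α) : ℤₘ₀) < _
          rw [← hx0']
          exact (Valued.v.restrict_lt_iff).mp hz⟩
    obtain ⟨h₀, hh₀⟩ := UniformSpace.Completion.denseRange_coe.mem_nhds hball
    have hsmall : (Valued.v ((UniformSpace.Completion.coe' (α := W.toAffine.FunctionField) h₀) - α) :
        ℤₘ₀) < ECApprox.e (-(2 * (n : ℤ) + 20)) := hh₀
    have hν0 : ν h₀ ≤ 1 := by
      have h1 : (Valued.v (UniformSpace.Completion.coe' (α := W.toAffine.FunctionField) h₀) : ℤₘ₀) ≤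
          max (Valued.v ((UniformSpace.Completion.coe' (α := W.toAffine.FunctionField) h₀) - α))
            (Valued.v α) := by
        have h2 := (Valued.v (R := UniformSpace.Completion W.toAffine.FunctionField)
          (Γ₀ := ℤₘ₀)).map_add
          ((UniformSpace.Completion.coe' (α := W.toAffine.FunctionField) h₀) - α) α
        simpa using h2
      rw [hvcoe] at h1
      have h2 : max (Valued.v ((UniformSpace.Completion.coe' (α := W.toAffine.FunctionField) h₀) - α))
          (Valued.v α) ≤ ECApprox.e 0 := by
        apply max_le _ hα1
        exact le_trans (le_of_lt hsmall) (ECApprox.e_le_e.mpr (by omega))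
      rw [← ECApprox.e_zero]
      exact le_trans h1 h2
    obtain ⟨f, g, hg0, hspan, hEg, hval⟩ :=
      ECApprox.approx (W := W.toAffine) ν hconst hneg hsurj hres' hnosol n h₀ hν0
    obtain ⟨Dg, hDg, _⟩ := ECApprox.E_vals (W := W.toAffine) ν hconst hneg hsurj g hg0
    have hDg3 : (Dg : ℤ) ≤ (n : ℤ) + 3 := by
      rw [hDg] at hEg
      rwa [ECApprox.e_le_e] at hEg
    have hDg0 : (0 : ℤ) ≤ (Dg : ℤ) := by positivity
    have hφg : algebraMap W.toAffine.CoordinateRing W.toAffine.FunctionField g ≠ 0 := fun h0 =>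
      hg0 (IsFractionRing.injective W.toAffine.CoordinateRing W.toAffine.FunctionField
        (by simpa using h0))
    have hνφg : ν (algebraMap W.toAffine.CoordinateRing W.toAffine.FunctionField g)
        = ECApprox.e Dg := hDg
    have hdiff : (h₀ - algebraMap W.toAffine.CoordinateRing W.toAffine.FunctionField f /
        algebraMap W.toAffine.CoordinateRing W.toAffine.FunctionField g) =
        (algebraMap W.toAffine.CoordinateRing W.toAffine.FunctionField g * h₀ -
          algebraMap W.toAffine.CoordinateRing W.toAffine.FunctionField f) /
          algebraMap W.toAffine.CoordinateRing W.toAffine.FunctionField g := by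
      field_simp
    have hνdiff : ν (h₀ - algebraMap W.toAffine.CoordinateRing W.toAffine.FunctionField f /
        algebraMap W.toAffine.CoordinateRing W.toAffine.FunctionField g) ≤
        ECApprox.e (-(n : ℤ) - 1 - Dg) := by
      rw [hdiff, map_div₀, hνφg]
      calc ν _ / ECApprox.e Dg ≤ ECApprox.e (-(n : ℤ) - 1) / ECApprox.e Dg := by
            rw [div_eq_mul_inv, div_eq_mul_inv]
            exact mul_le_mul_left hval _
        _ = ECApprox.e (-(n : ℤ) - 1 - Dg) := ECApprox.e_div _ _
    set s : UniformSpace.Completion W.toAffine.FunctionField :=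
      UniformSpace.Completion.coe' (α := W.toAffine.FunctionField)
        (algebraMap W.toAffine.CoordinateRing W.toAffine.FunctionField f /
          algebraMap W.toAffine.CoordinateRing W.toAffine.FunctionField g) with hsdef
    have hcoesub : (UniformSpace.Completion.coe' (α := W.toAffine.FunctionField) h₀) - s =
        UniformSpace.Completion.coe' (α := W.toAffine.FunctionField)
          (h₀ - algebraMap W.toAffine.CoordinateRing W.toAffine.FunctionField f /
            algebraMap W.toAffine.CoordinateRing W.toAffine.FunctionField g) :=
      (UniformSpace.Completion.coe_sub _ _).symm
    have hsplit : (Valued.v (α - s) : ℤₘ₀) ≤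
        max (Valued.v (α - UniformSpace.Completion.coe' (α := W.toAffine.FunctionField) h₀))
          (Valued.v ((UniformSpace.Completion.coe' (α := W.toAffine.FunctionField) h₀) - s)) := by
      have h3 : α - s = (α - UniformSpace.Completion.coe' (α := W.toAffine.FunctionField) h₀) +
          ((UniformSpace.Completion.coe' (α := W.toAffine.FunctionField) h₀) - s) :=
        (sub_add_sub_cancel α (UniformSpace.Completion.coe' (α := W.toAffine.FunctionField) h₀) s).symm
      rw [h3]
      exact Valuation.map_add _ _ _
    have h4 : (Valued.v (α - UniformSpace.Completion.coe' (α := W.toAffine.FunctionField) h₀) : ℤₘ₀) <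
        ECApprox.e (-(2 * (n : ℤ) + 20)) := by
      rw [Valuation.map_sub_swap]
      exact hsmall
    have h5 : (Valued.v ((UniformSpace.Completion.coe' (α := W.toAffine.FunctionField) h₀) - s) : ℤₘ₀) ≤
        ECApprox.e (-(n : ℤ) - 1 - Dg) := by
      rw [hcoesub, hvcoe]
      exact hνdiff
    have hZ : (Valued.v (α - s) : ℤₘ₀) ≤
        ECApprox.e (max (-(2 * (n : ℤ) + 20)) (-(n : ℤ) - 1 - Dg)) := by
      apply le_trans hsplit
      rw [ECApprox.e_max]
      exact max_le_max (le_of_lt h4) h5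
    have hzabs : zabs q (Valued.v (α - s)) < (q : ℝ) ^ (4 : ℕ) /
        zabs q (ν (algebraMap W.toAffine.CoordinateRing W.toAffine.FunctionField g)) ^ 2 := by
      have hRHS : (q : ℝ) ^ (4 : ℕ) /
          zabs q (ν (algebraMap W.toAffine.CoordinateRing W.toAffine.FunctionField g)) ^ 2 =
          (q : ℝ) ^ ((4 : ℤ) - 2 * (Dg : ℤ)) := by
        rw [hνφg, ECApprox.zabs_e]
        rw [show ((q : ℝ) ^ ((Dg : ℤ))) ^ 2 = (q : ℝ) ^ ((Dg : ℤ) + (Dg : ℤ)) by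
          rw [sq, ← zpow_add₀ (ne_of_gt hq0R)]]
        rw [show ((q : ℝ) ^ (4 : ℕ)) = (q : ℝ) ^ ((4 : ℤ)) by norm_cast]
        rw [← zpow_sub₀ (ne_of_gt hq0R)]
        congr 1
        ring
      rw [hRHS]
      calc zabs q (Valued.v (α - s)) ≤
          zabs q (ECApprox.e (max (-(2 * (n : ℤ) + 20)) (-(n : ℤ) - 1 - Dg))) :=
            ECApprox.zabs_mono hq1R hZ
        _ = (q : ℝ) ^ (max (-(2 * (n : ℤ) + 20)) (-(n : ℤ) - 1 - Dg)) := ECApprox.zabs_e q _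
        _ < (q : ℝ) ^ ((4 : ℤ) - 2 * (Dg : ℤ)) := by
            apply zpow_lt_zpow_right₀ hq2R
            apply max_lt <;> omega
    have hlast : (Valued.v (α - s) : ℤₘ₀) ≤ ECApprox.e (-(n : ℤ) - 1) := by
      apply le_trans hZ
      apply ECApprox.e_le_e.mpr
      apply max_le <;> omega
    exact ⟨(f, g), hg0, hspan, hzabs, hlast⟩
  choose FG hFG using key
  refine ⟨fun n => (FG n).1, fun n => (FG n).2,
    fun n => ⟨(hFG n).1, (hFG n).2.1, (hFG n).2.2.1⟩, ?_⟩
  rw [Filter.tendsto_atTop']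
  intro sset hs
  obtain ⟨γ, hγ⟩ := Valued.mem_nhds.mp hs
  obtain ⟨kγ, hkγ⟩ := ECApprox.exists_e (MonoidWithZeroHom.ValueGroup₀.embedding_unit_ne_zero γ)
  refine ⟨kγ.natAbs + 1, fun n hn => hγ ?_⟩
  show Valued.v.restrict _ < γ.1
  rw [Valuation.restrict_lt_iff_lt_embedding]
  rw [Valuation.map_sub_swap]
  apply lt_of_le_of_lt ((hFG n).2.2.2)
  rw [hkγ, ECApprox.e_lt_e]
  omega
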